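/- If E ⊆ ℕ and F ⊆ ℕ are both I_0-sets and E and F are separable by a Bohr rotation, then E ∪ F is an I_0-set. (This is the 1-step, Bohr, case of the paper's lemma on unions of separable interpolation sets.) -/

import Mathlib

open Filter Topology

noncomputable section

/-- A trigonometric polynomial. -/
def IsTrigPoly (ψ : ℕ → ℂ) : Prop :=
  ∃ (k : ℕ) (c : Fin k → ℂ) (α : Fin k → ℝ), ∀ n : ℕ,
    ψ n = ∑ j, c j * Complex.exp (2 * Real.pi * Complex.I * (n : ℂ) * (α j : ℂ))

/-- A Bohr almost periodic sequence: a uniform limit of trigonometric polynomials. -/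
def IsBohrAP (ψ : ℕ → ℂ) : Prop :=
  ∀ ε : ℝ, 0 < ε → ∃ φ : ℕ → ℂ, IsTrigPoly φ ∧ ∀ n : ℕ, ‖ψ n - φ n‖ < ε

/-- `E` is an `I₀`-set. -/
def IsI0Set (E : Set ℕ) : Prop :=
  ∀ f : ℕ → ℂ, (∃ C : ℝ, ∀ n ∈ E, ‖f n‖ ≤ C) →
    ∃ ψ : ℕ → ℂ, IsBohrAP ψ ∧ ∀ n ∈ E, ψ n = f n

/-- `A` and `B` are separable by a Bohr rotation. -/
def SeparableByBohr (A B : Set ℕ) : Prop :=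
  ∃ (d : ℕ) (α : Fin d → AddCircle (1 : ℝ)),
    closure ((fun n : ℕ => n • α) '' A) ∩ closure ((fun n : ℕ => n • α) '' B) = ∅

/-- `R` is a set of Bohr recurrence. -/
def IsBohrRecurrence (R : Set ℕ) : Prop :=
  ∀ (d : ℕ) (α : Fin d → AddCircle (1 : ℝ)),
    (0 : Fin d → AddCircle (1 : ℝ)) ∈ closure ((fun n : ℕ => n • α) '' R)

/-- `r` is a lacunary sequence of positive integers. -/
def IsLacunarySeq (r : ℕ → ℕ) : Prop :=
  (∀ n, 0 < r n) ∧ StrictMono r ∧ ∃ c : ℝ, 1 < c ∧ ∀ n, c ≤ (r (n + 1) : ℝ) / (r n : ℝ)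

/-- `r` is a sublacunary sequence of positive integers. -/
def IsSublacunarySeq (r : ℕ → ℕ) : Prop :=
  (∀ n, 0 < r n) ∧ StrictMono r ∧
    Tendsto (fun n : ℕ => Real.log (r n) / (n : ℝ)) atTop (𝓝 0)

theorem trig_const (z : ℂ) : IsTrigPoly (fun _ => z) := by
  refine ⟨1, fun _ => z, fun _ => 0, fun n => ?_⟩
  simp

theorem trig_add {ψ₁ ψ₂ : ℕ → ℂ} (h₁ : IsTrigPoly ψ₁) (h₂ : IsTrigPoly ψ₂) :
    IsTrigPoly (fun n => ψ₁ n + ψ₂ n) := by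
  obtain ⟨k₁, c₁, a₁, h₁⟩ := h₁
  obtain ⟨k₂, c₂, a₂, h₂⟩ := h₂
  refine ⟨k₁ + k₂, Fin.append c₁ c₂, Fin.append a₁ a₂, fun n => ?_⟩
  rw [Fin.sum_univ_add]
  simp only [Fin.append_left, Fin.append_right]
  rw [h₁ n, h₂ n]

theorem trig_mul {ψ₁ ψ₂ : ℕ → ℂ} (h₁ : IsTrigPoly ψ₁) (h₂ : IsTrigPoly ψ₂) :
    IsTrigPoly (fun n => ψ₁ n * ψ₂ n) := by
  obtain ⟨k₁, c₁, a₁, h₁⟩ := h₁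
  obtain ⟨k₂, c₂, a₂, h₂⟩ := h₂
  refine ⟨k₁ * k₂, fun j => c₁ (finProdFinEquiv.symm j).1 * c₂ (finProdFinEquiv.symm j).2,
    fun j => a₁ (finProdFinEquiv.symm j).1 + a₂ (finProdFinEquiv.symm j).2, fun n => ?_⟩
  dsimp only
  rw [h₁ n, h₂ n, Finset.sum_mul_sum]
  rw [← Equiv.sum_comp (finProdFinEquiv : Fin k₁ × Fin k₂ ≃ Fin (k₁ * k₂))]
  rw [← Finset.sum_product']
  simp only [Equiv.symm_apply_apply]
  refine Finset.sum_congr rfl fun i _ => ?_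
  rw [mul_mul_mul_comm, ← Complex.exp_add]
  push_cast
  ring_nf

theorem trig_star {ψ : ℕ → ℂ} (h : IsTrigPoly ψ) :
    IsTrigPoly (fun n => starRingEnd ℂ (ψ n)) := by
  obtain ⟨k, c, a, h⟩ := h
  refine ⟨k, fun j => starRingEnd ℂ (c j), fun j => -(a j), fun n => ?_⟩
  dsimp only
  rw [h n, map_sum]
  refine Finset.sum_congr rfl fun j _ => ?_
  rw [map_mul, ← Complex.exp_conj]
  congr 1
  simp only [map_mul, Complex.conj_I, Complex.conj_ofReal, map_ofNat, map_natCast]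
  push_cast
  ring

theorem trig_bounded {ψ : ℕ → ℂ} (h : IsTrigPoly ψ) : ∃ C : ℝ, ∀ n, ‖ψ n‖ ≤ C := by
  obtain ⟨k, c, a, h⟩ := h
  refine ⟨∑ j, ‖c j‖, fun n => ?_⟩
  rw [h n]
  refine le_trans (norm_sum_le _ _) ?_
  apply Finset.sum_le_sum
  intro j _
  rw [norm_mul]
  have : ‖Complex.exp (2 * Real.pi * Complex.I * (n : ℂ) * (a j : ℂ))‖ = 1 := by
    have : (2 * Real.pi * Complex.I * (n : ℂ) * (a j : ℂ))
        = ((2 * Real.pi * n * a j : ℝ) : ℂ) * Complex.I := by push_cast; ring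
    rw [this, Complex.norm_exp_ofReal_mul_I]
  rw [this, mul_one]

theorem bohrAP_bounded {ψ : ℕ → ℂ} (h : IsBohrAP ψ) : ∃ C : ℝ, 0 ≤ C ∧ ∀ n, ‖ψ n‖ ≤ C := by
  obtain ⟨φ, hφ, hd⟩ := h 1 one_pos
  obtain ⟨C, hC⟩ := trig_bounded hφ
  have hb : ∀ n, ‖ψ n‖ ≤ C + 1 := by
    intro n
    calc ‖ψ n‖ ≤ ‖ψ n - φ n‖ + ‖φ n‖ := by
          simpa using norm_add_le (ψ n - φ n) (φ n)
      _ ≤ C + 1 := by have := hd n; have := hC n; linarith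
  exact ⟨C + 1, (norm_nonneg (ψ 0)).trans (hb 0), hb⟩

theorem bohrAP_const (z : ℂ) : IsBohrAP (fun _ => z) := by
  intro ε hε
  exact ⟨fun _ => z, trig_const z, fun n => by simpa using hε⟩

theorem bohrAP_add {ψ₁ ψ₂ : ℕ → ℂ} (h₁ : IsBohrAP ψ₁) (h₂ : IsBohrAP ψ₂) :
    IsBohrAP (fun n => ψ₁ n + ψ₂ n) := by
  intro ε hε
  obtain ⟨φ₁, ht₁, hd₁⟩ := h₁ (ε / 2) (by linarith)
  obtain ⟨φ₂, ht₂, hd₂⟩ := h₂ (ε / 2) (by linarith)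
  refine ⟨fun n => φ₁ n + φ₂ n, trig_add ht₁ ht₂, fun n => ?_⟩
  have : ψ₁ n + ψ₂ n - (φ₁ n + φ₂ n) = (ψ₁ n - φ₁ n) + (ψ₂ n - φ₂ n) := by ring
  dsimp only
  rw [this]
  calc ‖_‖ ≤ ‖ψ₁ n - φ₁ n‖ + ‖ψ₂ n - φ₂ n‖ :=
        norm_add_le _ _
    _ < ε := by have := hd₁ n; have := hd₂ n; linarith

theorem bohrAP_mul {ψ₁ ψ₂ : ℕ → ℂ} (h₁ : IsBohrAP ψ₁) (h₂ : IsBohrAP ψ₂) :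
    IsBohrAP (fun n => ψ₁ n * ψ₂ n) := by
  intro ε hε
  obtain ⟨C₁, hC₁0, hC₁⟩ := bohrAP_bounded h₁
  obtain ⟨C₂, hC₂0, hC₂⟩ := bohrAP_bounded h₂
  set δ : ℝ := min 1 (ε / (2 * (C₁ + C₂ + 1))) with hδdef
  have hden : 0 < 2 * (C₁ + C₂ + 1) := by linarith
  have hδpos : 0 < δ := lt_min one_pos (div_pos hε hden)
  obtain ⟨φ₁, ht₁, hd₁⟩ := h₁ δ hδpos
  obtain ⟨φ₂, ht₂, hd₂⟩ := h₂ δ hδpos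
  refine ⟨fun n => φ₁ n * φ₂ n, trig_mul ht₁ ht₂, fun n => ?_⟩
  dsimp only
  have key : ψ₁ n * ψ₂ n - φ₁ n * φ₂ n = ψ₁ n * (ψ₂ n - φ₂ n) + (ψ₁ n - φ₁ n) * φ₂ n := by ring
  have hφ₂ : ‖φ₂ n‖ ≤ C₂ + 1 := by
    calc ‖φ₂ n‖ ≤ ‖φ₂ n - ψ₂ n‖ + ‖ψ₂ n‖ := by
          simpa using norm_add_le (φ₂ n - ψ₂ n) (ψ₂ n)
      _ ≤ C₂ + 1 := by
          have h1 : ‖φ₂ n - ψ₂ n‖ = ‖ψ₂ n - φ₂ n‖ := by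
            rw [← norm_neg]; ring_nf
          have := hd₂ n; have := hC₂ n
          have hδ1 : δ ≤ 1 := min_le_left _ _
          rw [h1] at *
          linarith
  have hδε : δ * (C₁ + C₂ + 1) ≤ ε / 2 := by
    have : δ ≤ ε / (2 * (C₁ + C₂ + 1)) := min_le_right _ _
    calc δ * (C₁ + C₂ + 1) ≤ (ε / (2 * (C₁ + C₂ + 1))) * (C₁ + C₂ + 1) := by
          apply mul_le_mul_of_nonneg_right this; linarith
      _ = ε / 2 := by field_simp
  rw [key]
  calc ‖_‖ ≤ ‖ψ₁ n * (ψ₂ n - φ₂ n)‖ + ‖(ψ₁ n - φ₁ n) * φ₂ n‖ :=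
        norm_add_le _ _
    _ = ‖ψ₁ n‖ * ‖ψ₂ n - φ₂ n‖
        + ‖ψ₁ n - φ₁ n‖ * ‖φ₂ n‖ := by rw [norm_mul, norm_mul]
    _ ≤ C₁ * δ + δ * (C₂ + 1) := by
        have := hC₁ n; have := hd₁ n; have := hd₂ n
        have h1 : ‖ψ₁ n‖ * ‖ψ₂ n - φ₂ n‖ ≤ C₁ * δ :=
          mul_le_mul (hC₁ n) (le_of_lt (hd₂ n)) (norm_nonneg _) hC₁0
        have h2 : ‖ψ₁ n - φ₁ n‖ * ‖φ₂ n‖ ≤ δ * (C₂ + 1) :=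
          mul_le_mul (le_of_lt (hd₁ n)) hφ₂ (norm_nonneg _) (le_of_lt hδpos)
        linarith
    _ = δ * (C₁ + C₂ + 1) := by ring
    _ ≤ ε / 2 := hδε
    _ < ε := by linarith

instance : Fact ((0:ℝ) < 1) := ⟨one_pos⟩

theorem bohrAP_of_continuous (d : ℕ) (α : Fin d → AddCircle (1 : ℝ))
    (g : C((Fin d → AddCircle (1 : ℝ)), ℂ)) : IsBohrAP (fun n => g (n • α)) := by
  let gen : Fin d → C((Fin d → AddCircle (1 : ℝ)), ℂ) := fun j => (fourier 1).comp ⟨fun x : Fin d → AddCircle (1:ℝ) => x j, continuous_apply j⟩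
  let A : StarSubalgebra ℂ C((Fin d → AddCircle (1 : ℝ)), ℂ) := StarAlgebra.adjoin ℂ (Set.range gen)
  have claim : ∀ p ∈ A, IsTrigPoly (fun n => p (n • α)) := by
    intro p hp
    induction hp using StarAlgebra.adjoin_induction with
    | mem x hx =>
      obtain ⟨j, rfl⟩ := hx
      obtain ⟨a, ha⟩ := QuotientAddGroup.mk_surjective (α j)
      refine ⟨1, fun _ => 1, fun _ => a, fun n => ?_⟩
      have h1 : (n • α) j = ((n • a : ℝ) : AddCircle (1:ℝ)) := by
        rw [Pi.smul_apply, ← ha]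
        exact (QuotientAddGroup.mk_nsmul _ a n).symm
      show fourier 1 ((n • α) j) = _
      rw [h1, fourier_coe_apply]
      simp only [Finset.sum_const, Finset.card_univ, Fintype.card_fin, one_smul, one_mul]
      push_cast
      ring_nf
    | algebraMap r => simpa using trig_const r
    | add x y hx hy ihx ihy => exact trig_add ihx ihy
    | mul x y hx hy ihx ihy => exact trig_mul ihx ihy
    | star x hx ihx => exact trig_star ihx
  have hsep : A.SeparatesPoints := by
    intro x y hxy
    obtain ⟨j, hj⟩ := Function.ne_iff.mp hxy
    refine ⟨_, ⟨gen j, StarAlgebra.subset_adjoin ℂ _ ⟨j, rfl⟩, rfl⟩, ?_⟩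
    dsimp only [gen]
    simp only [ContinuousMap.comp_apply, ContinuousMap.coe_mk, fourier_one]
    intro h
    rw [Circle.coe_inj] at h
    exact hj (AddCircle.injective_toCircle one_ne_zero h)
  have htop : A.topologicalClosure = ⊤ :=
    ContinuousMap.starSubalgebra_topologicalClosure_eq_top_of_separatesPoints A hsep
  have hg : g ∈ closure (A : Set C((Fin d → AddCircle (1 : ℝ)), ℂ)) := by
    have h1 : g ∈ A.topologicalClosure := by rw [htop]; trivial
    exact h1
  intro ε hε
  obtain ⟨p, hpA, hdist⟩ := Metric.mem_closure_iff.mp hg ε hε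
  refine ⟨fun n => p (n • α), claim p hpA, fun n => ?_⟩
  dsimp only
  have h2 : ‖g (n • α) - p (n • α)‖ = dist (g (n • α)) (p (n • α)) :=
    (Complex.dist_eq _ _).symm
  rw [h2]
  exact lt_of_le_of_lt (ContinuousMap.dist_apply_le_dist _) hdist

/-- If `E` and `F` are `I₀`-sets separable by a Bohr rotation, then `E ∪ F` is an
`I₀`-set. -/
theorem I0_union_of_separable (E F : Set ℕ) (hE : IsI0Set E) (hF : IsI0Set F)
    (hsep : SeparableByBohr E F) : IsI0Set (E ∪ F) := by
  intro f hf
  obtain ⟨C, hC⟩ := hf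
  obtain ⟨d, α, hdisj⟩ := hsep
  have hd : Disjoint (closure ((fun n : ℕ => n • α) '' E)) (closure ((fun n : ℕ => n • α) '' F)) :=
    Set.disjoint_iff_inter_eq_empty.mpr hdisj
  obtain ⟨u, hu0, hu1, hu01⟩ := exists_continuous_zero_one_of_isClosed
    isClosed_closure isClosed_closure hd.symm
  let g : C((Fin d → AddCircle (1 : ℝ)), ℂ) :=
    ⟨fun x => (u x : ℂ), Complex.continuous_ofReal.comp u.continuous⟩
  have hχ : IsBohrAP (fun n => g (n • α)) := bohrAP_of_continuous d α g
  have hχE : ∀ n ∈ E, g (n • α) = 1 := by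
    intro n hn
    have : (n • α) ∈ closure ((fun n : ℕ => n • α) '' E) :=
      subset_closure ⟨n, hn, rfl⟩
    have := hu1 this
    simp only [ContinuousMap.coe_mk, g]
    rw [show u (n • α) = 1 from this]
    norm_num
  have hχF : ∀ n ∈ F, g (n • α) = 0 := by
    intro n hn
    have : (n • α) ∈ closure ((fun n : ℕ => n • α) '' F) :=
      subset_closure ⟨n, hn, rfl⟩
    have := hu0 this
    simp only [ContinuousMap.coe_mk, g]
    rw [show u (n • α) = 0 from this]
    norm_num
  obtain ⟨ψE, hψE, hψEf⟩ := hE f ⟨C, fun n hn => hC n (Or.inl hn)⟩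
  obtain ⟨ψF, hψF, hψFf⟩ := hF f ⟨C, fun n hn => hC n (Or.inr hn)⟩
  refine ⟨fun n => ψE n * g (n • α) + ψF n * (1 - g (n • α)), ?_, ?_⟩
  · have h1 : IsBohrAP (fun n => 1 - g (n • α)) := by
      have := bohrAP_add (bohrAP_const 1) (bohrAP_mul (bohrAP_const (-1)) hχ)
      convert this using 2 with n
      ring
    exact bohrAP_add (bohrAP_mul hψE hχ) (bohrAP_mul hψF h1)
  · intro n hn
    rcases hn with hn | hn
    · dsimp only; rw [hχE n hn, hψEf n hn]; ring
    · dsimp only; rw [hχF n hn, hψFf n hn]; ring
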